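/- Let uv be a cube edge of CCC_n, i.e. u = (x,k) and v = (y,k) where x and y differ exactly in coordinate k. Then |W_{u,v}| = |W_{v,u}| = n * 2^{n-1}; equivalently, no vertex of CCC_n is equidistant from u and v. -/

import Mathlib

open SimpleGraph

/-- The cube-connected cycles graph `CCC n`: vertices are pairs of a binary
`n`-string and a cycle digit in `ZMod n`; `(x,k)` and `(y,m)` are adjacent iff
either `x = y` and `m = k ± 1` (cycle edge), or `k = m` and `x, y` differ
exactly in the `k`-th coordinate (cube edge). -/
def CCC (n : ℕ) : SimpleGraph ((Fin n → Bool) × ZMod n) :=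
  SimpleGraph.fromRel (fun p q =>
    (p.1 = q.1 ∧ (q.2 = p.2 + 1 ∨ q.2 = p.2 - 1)) ∨
    (p.2 = q.2 ∧ ∀ i : Fin n, (p.1 i ≠ q.1 i ↔ ((i : ℕ) : ZMod n) = p.2)))

namespace CCCaux
variable {n : ℕ}

abbrev R (n : ℕ) : ((Fin n → Bool) × ZMod n) → ((Fin n → Bool) × ZMod n) → Prop :=
  fun p q =>
    (p.1 = q.1 ∧ (q.2 = p.2 + 1 ∨ q.2 = p.2 - 1)) ∨
    (p.2 = q.2 ∧ ∀ i : Fin n, (p.1 i ≠ q.1 i ↔ ((i : ℕ) : ZMod n) = p.2))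

lemma ccc_adj {p q} : (CCC n).Adj p q ↔ p ≠ q ∧ (R n p q ∨ R n q p) := by
  rw [CCC, fromRel_adj]

lemma castInj [NeZero n] {i j : Fin n} (h : ((i : ℕ) : ZMod n) = ((j : ℕ) : ZMod n)) : i = j := by
  have := congrArg ZMod.val h
  rw [ZMod.val_natCast, ZMod.val_natCast, Nat.mod_eq_of_lt i.isLt, Nat.mod_eq_of_lt j.isLt] at this
  exact Fin.ext this

/-- flip coordinate `i` -/
def flp (i : Fin n) (p : (Fin n → Bool) × ZMod n) : (Fin n → Bool) × ZMod n :=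
  (Function.update p.1 i (!(p.1 i)), p.2)

lemma flp_flp (i : Fin n) (p) : flp i (flp i p) = p := by
  unfold flp
  ext j
  · by_cases h : j = i <;> simp [h]
  · rfl

lemma flp_key (i : Fin n) (p q : (Fin n → Bool) × ZMod n) (j : Fin n) :
    ((flp i p).1 j ≠ (flp i q).1 j) ↔ (p.1 j ≠ q.1 j) := by
  by_cases hj : j = i
  · subst hj; simp [flp]
  · simp [flp, hj]

lemma flp_R (i : Fin n) {p q} (h : R n p q) : R n (flp i p) (flp i q) := by
  rcases h with ⟨h1, h2⟩ | ⟨h1, h2⟩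
  · exact Or.inl ⟨by ext j; by_cases hj : j = i <;> simp [flp, hj, h1], h2⟩
  · exact Or.inr ⟨h1, fun j => (flp_key i p q j).trans (h2 j)⟩

lemma flp_adj (i : Fin n) {p q} (h : (CCC n).Adj p q) : (CCC n).Adj (flp i p) (flp i q) := by
  rw [ccc_adj] at h ⊢
  refine ⟨fun he => h.1 (by rw [← flp_flp i p, he, flp_flp]), ?_⟩
  exact h.2.imp (flp_R i) (flp_R i)

/-- flip as a graph homomorphism -/
def flpHom (i : Fin n) : CCC n →g CCC n := ⟨flp i, fun h => flp_adj i h⟩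


lemma bool_ne : ∀ {a b : Bool}, a ≠ b → b = !a := by decide

lemma flp_of_adj [NeZero n] (i : Fin n) {p q : (Fin n → Bool) × ZMod n}
    (h : (CCC n).Adj p q) (hi : p.1 i ≠ q.1 i) : q = flp i p := by
  rw [ccc_adj] at h
  have hcube : p.2 = q.2 ∧ ∀ j : Fin n, (p.1 j ≠ q.1 j ↔ ((j : ℕ) : ZMod n) = p.2) := by
    rcases h.2 with (⟨h1, h2⟩ | ⟨h1, h2⟩) | (⟨h1, h2⟩ | ⟨h1, h2⟩)
    · exact absurd (congrFun h1 i) hi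
    · exact ⟨h1, h2⟩
    · exact absurd (congrFun h1 i).symm hi
    · exact ⟨h1.symm, fun j => ne_comm.trans ((h2 j).trans (by rw [h1]))⟩
  have hpi : ((i : ℕ) : ZMod n) = p.2 := (hcube.2 i).mp hi
  have : ∀ j, q.1 j = (flp i p).1 j := by
    intro j
    by_cases hj : j = i
    · rw [hj]
      simp only [flp, Function.update_self]
      exact bool_ne hi
    · have : ¬ (p.1 j ≠ q.1 j) := by
        rw [hcube.2 j, ← hpi]
        intro hc
        exact hj (castInj hc)
      simp only [flp, Function.update_of_ne hj]
      exact (not_ne_iff.mp this).symm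
  exact Prod.ext (funext this) hcube.1.symm

/-- walk shortening: a walk from `a` to `b` that changes coordinate `i`
    yields a walk from `a` to `flp i b` that is one step shorter. -/
lemma shorten [NeZero n] (i : Fin n) {a b : (Fin n → Bool) × ZMod n}
    (W : (CCC n).Walk a b) (hab : a.1 i ≠ b.1 i) :
    ∃ W' : (CCC n).Walk a (flp i b), W'.length + 1 = W.length := by
  induction W with
  | nil => exact absurd rfl hab
  | @cons u c b h W ih =>
    by_cases huc : u.1 i = c.1 i
    · have hcb : c.1 i ≠ b.1 i := fun hc => hab (huc.trans hc)
      obtain ⟨W', hW'⟩ := ih hcb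
      exact ⟨Walk.cons h W', by simp only [Walk.length_cons]; omega⟩
    · have hc : c = flp i u := flp_of_adj i h huc
      have hcb : flp i c = u := by rw [hc, flp_flp]
      refine ⟨((W.map (flpHom i)).copy hcb rfl : (CCC n).Walk u (flp i b)), ?_⟩
      exact congrArg (· + 1) ((Walk.length_copy _ _ _).trans (Walk.length_map _ _))

lemma adj_cycle [Fact (1 < n)] (w : Fin n → Bool) (m : ZMod n) :
    (CCC n).Adj (w, m) (w, m + 1) := by
  rw [ccc_adj]
  refine ⟨fun h => ?_, Or.inl (Or.inl ⟨rfl, Or.inl rfl⟩)⟩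
  have : m = m + 1 := congrArg Prod.snd h
  exact one_ne_zero (left_eq_add.mp this)

lemma reach_cycle [NeZero n] [Fact (1 < n)] (w : Fin n → Bool) (m m' : ZMod n) :
    (CCC n).Reachable (w, m) (w, m') := by
  have key : ∀ d : ℕ, (CCC n).Reachable (w, m) (w, m + (d : ZMod n)) := by
    intro d
    induction d with
    | zero => simpa using Reachable.refl (w, m)
    | succ d ih =>
      have h1 : (m + (d : ZMod n)) + 1 = m + (((d+1 : ℕ)) : ZMod n) := by push_cast; ring
      exact ih.trans (h1 ▸ (adj_cycle w (m + (d : ZMod n))).reachable)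
  have := key (m' - m).val
  rwa [ZMod.natCast_val, ZMod.cast_id, add_sub_cancel] at this

lemma adj_flip [NeZero n] (w : Fin n → Bool) (i : Fin n) :
    (CCC n).Adj (w, ((i : ℕ) : ZMod n)) (Function.update w i (!(w i)), ((i : ℕ) : ZMod n)) := by
  rw [ccc_adj]
  constructor
  · intro h
    have := congrFun (congrArg Prod.fst h) i
    simp at this
  · refine Or.inl (Or.inr ⟨rfl, fun j => ?_⟩)
    by_cases hj : j = i
    · subst hj; simp
    · simp only [Function.update_of_ne hj]
      simp only [ne_eq, not_true_eq_false, false_iff]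
      exact fun h => hj (castInj h)

lemma reach_flip [NeZero n] [Fact (1 < n)] (w : Fin n → Bool) (i : Fin n) (b : Bool)
    (m m' : ZMod n) : (CCC n).Reachable (w, m) (Function.update w i b, m') := by
  by_cases hb : b = w i
  · rw [hb, Function.update_eq_self]
    exact reach_cycle w m m'
  · rw [bool_ne (Ne.symm hb)]
    exact ((reach_cycle w m ((i : ℕ) : ZMod n)).trans
      (adj_flip w i).reachable).trans
      (reach_cycle _ ((i : ℕ) : ZMod n) m')

lemma reach_aux [NeZero n] [Fact (1 < n)] (s : Finset (Fin n)) :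
    ∀ (w w' : Fin n → Bool) (m m' : ZMod n), (∀ j ∉ s, w j = w' j) →
      (CCC n).Reachable (w, m) (w', m') := by
  induction s using Finset.induction with
  | empty =>
    intro w w' m m' h
    have : w = w' := funext fun j => h j (Finset.notMem_empty j)
    rw [this]; exact reach_cycle w' m m'
  | @insert i s hi ih =>
    intro w w' m m' h
    refine (reach_flip w i (w' i) m m).trans (ih _ w' m m' fun j hj => ?_)
    by_cases hji : j = i
    · subst hji; simp
    · rw [Function.update_of_ne hji]
      exact h j (by simp [hji, hj])

lemma reach_all [NeZero n] [Fact (1 < n)] (p q : (Fin n → Bool) × ZMod n) :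
    (CCC n).Reachable p q :=
  reach_aux Finset.univ p.1 q.1 p.2 q.2 (fun j hj => absurd (Finset.mem_univ j) hj)

lemma dist_lt_of_eq (hn : 3 ≤ n) (x y : Fin n → Bool) (k : ZMod n)
    (hxy : ∀ i : Fin n, x i ≠ y i ↔ ((i : ℕ) : ZMod n) = k)
    (i : Fin n) (hik : ((i : ℕ) : ZMod n) = k)
    (z : (Fin n → Bool) × ZMod n) (hz : z.1 i = x i) :
    (CCC n).dist z (x, k) < (CCC n).dist z (y, k) := by
  haveI : NeZero n := ⟨by omega⟩
  haveI : Fact (1 < n) := ⟨by omega⟩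
  have hxyi : x i ≠ y i := (hxy i).mpr hik
  have hflp : flp i (y, k) = (x, k) := by
    refine Prod.ext (funext fun j => ?_) rfl
    by_cases hj : j = i
    · rw [hj]
      simp only [flp, Function.update_self]
      exact (bool_ne fun h => hxyi h.symm).symm ▸ rfl
    · simp only [flp, Function.update_of_ne hj]
      by_contra hne
      exact hj (castInj ((hxy j).mp (Ne.symm hne) ▸ hik ▸ rfl))
  obtain ⟨W, hW⟩ := (reach_all z ((y, k))).exists_walk_length_eq_dist
  have hzi : z.1 i ≠ (y, k).1 i := hz ▸ hxyi
  obtain ⟨W', hW'⟩ := shorten i W hzi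
  calc (CCC n).dist z (x, k) ≤ (W'.copy rfl hflp).length := SimpleGraph.dist_le _
    _ = W'.length := Walk.length_copy _ _ _
    _ < W.length := by omega
    _ = (CCC n).dist z (y, k) := hW

lemma bool_trans : ∀ {a b c : Bool}, a ≠ b → b ≠ c → a = c := by decide

lemma card_bit [NeZero n] (i : Fin n) (b : Bool) :
    Nat.card {z : (Fin n → Bool) × ZMod n | z.1 i = b} = n * 2 ^ (n - 1) := by
  have e : {z : (Fin n → Bool) × ZMod n | z.1 i = b} ≃
      (({j : Fin n // j ≠ i} → Bool) × ZMod n) :=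
    { toFun := fun z => (fun j => z.1.1 j.1, z.1.2)
      invFun := fun g => ⟨(fun j => if h : j = i then b else g.1 ⟨j, h⟩, g.2), by simp⟩
      left_inv := by
        rintro ⟨⟨w, m⟩, hw⟩
        ext j
        · by_cases hj : j = i
          · subst hj; simpa using hw.symm
          · simp [hj]
        · rfl
      right_inv := by
        rintro ⟨g, m⟩
        refine Prod.ext (funext fun j => ?_) rfl
        simp [j.2]
    }
  rw [Nat.card_congr e, Nat.card_eq_fintype_card, Fintype.card_prod, Fintype.card_fun,
    ZMod.card, Fintype.card_bool]
  have : Fintype.card {j : Fin n // j ≠ i} = n - 1 := by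
    have := Fintype.card_subtype_compl (fun j : Fin n => j = i)
    rw [Fintype.card_subtype_eq, Fintype.card_fin] at this
    exact this
  rw [this, mul_comm]

end CCCaux


open CCCaux

/-- for a cube edge uv of CCC_n, |W_{u,v}| = |W_{v,u}| = n * 2^(n-1); equivalently no vertex is equidistant from u and v. -/
theorem CCC_cube_edge_halves (n : ℕ) (hn : 3 ≤ n) (x y : Fin n → Bool) (k : ZMod n)
    (hxy : ∀ i : Fin n, x i ≠ y i ↔ ((i : ℕ) : ZMod n) = k) :
    Nat.card {z : (Fin n → Bool) × ZMod n |
        (CCC n).dist z (x, k) < (CCC n).dist z (y, k)} = n * 2 ^ (n - 1) ∧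
    Nat.card {z : (Fin n → Bool) × ZMod n |
        (CCC n).dist z (y, k) < (CCC n).dist z (x, k)} = n * 2 ^ (n - 1) ∧
    ∀ z : (Fin n → Bool) × ZMod n, (CCC n).dist z (x, k) ≠ (CCC n).dist z (y, k) := by
  haveI : NeZero n := ⟨by omega⟩
  set i : Fin n := ⟨k.val, ZMod.val_lt k⟩ with hidef
  have hik : ((i : ℕ) : ZMod n) = k := by
    show ((k.val : ℕ) : ZMod n) = k
    rw [ZMod.natCast_val, ZMod.cast_id]
  have hxy' : ∀ j : Fin n, y j ≠ x j ↔ ((j : ℕ) : ZMod n) = k := fun j => ne_comm.trans (hxy j)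
  have hxyi : x i ≠ y i := (hxy i).mpr hik
  have key : ∀ z : (Fin n → Bool) × ZMod n,
      ((CCC n).dist z (x, k) < (CCC n).dist z (y, k) ↔ z.1 i = x i) ∧
      ((CCC n).dist z (y, k) < (CCC n).dist z (x, k) ↔ z.1 i = y i) := by
    intro z
    by_cases hz : z.1 i = x i
    · have dlt := dist_lt_of_eq hn x y k hxy i hik z hz
      refine ⟨⟨fun _ => hz, fun _ => dlt⟩, ⟨fun h => absurd dlt (Nat.lt_asymm h), fun h => ?_⟩⟩
      exact absurd (hz.symm.trans h) hxyi
    · have hz' : z.1 i = y i := bool_trans hz hxyi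
      have dlt := dist_lt_of_eq hn y x k hxy' i hik z hz'
      exact ⟨⟨fun h => absurd dlt (Nat.lt_asymm h), fun h => absurd h hz⟩,
        ⟨fun _ => hz', fun _ => dlt⟩⟩
  have h1 : {z : (Fin n → Bool) × ZMod n | (CCC n).dist z (x, k) < (CCC n).dist z (y, k)}
      = {z : (Fin n → Bool) × ZMod n | z.1 i = x i} := Set.ext fun z => (key z).1
  have h2 : {z : (Fin n → Bool) × ZMod n | (CCC n).dist z (y, k) < (CCC n).dist z (x, k)}
      = {z : (Fin n → Bool) × ZMod n | z.1 i = y i} := Set.ext fun z => (key z).2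
  refine ⟨by rw [h1]; exact card_bit i (x i), by rw [h2]; exact card_bit i (y i), fun z => ?_⟩
  by_cases hz : z.1 i = x i
  · exact (dist_lt_of_eq hn x y k hxy i hik z hz).ne
  · exact (dist_lt_of_eq hn y x k hxy' i hik z (bool_trans hz hxyi)).ne'
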